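/- Let h, g ∈ ℂ^N be linearly independent, σ > 0, R₀ > 0, P_min ≥ 0, and h₀, g₀ ∈ ℂ with |h₀|² = 4^{R₀}|g₀|². Let ξ₁ > 0 be the unique positive eigenvalue of the operator M = h h† − 4^{R₀} g g† (i.e., M x = ⟨h, x⟩h − 4^{R₀}⟨g, x⟩g), and let v₁ be a unit eigenvector of M for ξ₁. Then the minimum of P_s + ‖w‖² over all P_s ≥ P_min and w ∈ ℂ^N satisfying σ² + P_s|h₀|² + |⟨h, w⟩|² = 4^{R₀}(σ² + P_s|g₀|² + |⟨g, w⟩|²) equals P_min + (4^{R₀} − 1)σ²/ξ₁, and it is attained at P_s = P_min, w = √((4^{R₀} − 1)σ²/ξ₁) · v₁. -/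

import Mathlib

open Complex

private lemma stmt16_scalar_neg (a ξ : ℝ) (hξ : 0 < ξ) (ha : 0 < a) (c d e f : ℂ)
    (h1 : d * (starRingEnd ℂ) d - (a : ℂ) * (f * (starRingEnd ℂ) f) = (ξ : ℂ))
    (h2 : d * (starRingEnd ℂ) c = (a : ℂ) * (f * (starRingEnd ℂ) e)) :
    Complex.normSq c - a * Complex.normSq e ≤ 0 := by
  have h3 : (starRingEnd ℂ) d * c = (a : ℂ) * ((starRingEnd ℂ) f * e) := by
    have h3' := congrArg (starRingEnd ℂ) h2
    rw [map_mul, map_mul, map_mul, Complex.conj_conj, Complex.conj_conj,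
      Complex.conj_ofReal] at h3'
    linear_combination h3'
  have E : (c * (starRingEnd ℂ) c - (a : ℂ) * (e * (starRingEnd ℂ) e)) * (d * (starRingEnd ℂ) d)
      = -(a : ℂ) * ((c * f - d * e) * ((starRingEnd ℂ) (c * f - d * e)))
        - (ξ : ℂ) * (c * (starRingEnd ℂ) c) := by
    rw [map_sub, map_mul, map_mul]
    linear_combination (-(c * (starRingEnd ℂ) c)) * h1 + (c * (starRingEnd ℂ) d) * h2
      + (d * (starRingEnd ℂ) c) * h3
  rw [Complex.mul_conj, Complex.mul_conj, Complex.mul_conj, Complex.mul_conj] at E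
  have E' : (Complex.normSq c - a * Complex.normSq e) * Complex.normSq d
      = -a * Complex.normSq (c * f - d * e) - ξ * Complex.normSq c := by exact_mod_cast E
  have hd : d ≠ 0 := by
    intro h0
    rw [h0] at h1
    simp only [map_zero, mul_zero, zero_mul, zero_sub] at h1
    rw [Complex.mul_conj] at h1
    have : -(a * Complex.normSq f) = ξ := by exact_mod_cast h1
    nlinarith [Complex.normSq_nonneg f]
  have hdpos : 0 < Complex.normSq d := Complex.normSq_pos.mpr hd
  nlinarith [Complex.normSq_nonneg (c * f - d * e), Complex.normSq_nonneg c]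

set_option maxHeartbeats 1000000 in
/-- DF total-power minimization under a secrecy rate constraint in the
degenerate case `|h₀|² = 4^{R₀}|g₀|²`: the minimum of `Pₛ + ‖w‖²` subject to
`σ² + Pₛ|h₀|² + |⟨h,w⟩|² = 4^{R₀}(σ² + Pₛ|g₀|² + |⟨g,w⟩|²)` and `Pₛ ≥ P_min` equals
`P_min + (4^{R₀} − 1)σ²/ξ₁`, attained at `Pₛ = P_min`, `w = √((4^{R₀} − 1)σ²/ξ₁)·v₁`,
where `ξ₁ > 0` is the positive eigenvalue of `M = h h† − 4^{R₀} g g†` with unit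
eigenvector `v₁`. -/
theorem stmt16 {N : ℕ} (h g : EuclideanSpace ℂ (Fin N))
    (hind : LinearIndependent ℂ ![h, g])
    (σ R₀ Pmin : ℝ) (hσ : 0 < σ) (hR₀ : 0 < R₀) (hPmin : 0 ≤ Pmin)
    (h₀ g₀ : ℂ) (hdeg : ‖h₀‖ ^ 2 = (4 : ℝ) ^ R₀ * ‖g₀‖ ^ 2)
    (M : EuclideanSpace ℂ (Fin N) → EuclideanSpace ℂ (Fin N))
    (hM : ∀ x, M x = (inner ℂ h x : ℂ) • h -
      (((4 : ℝ) ^ R₀ : ℝ) : ℂ) • ((inner ℂ g x : ℂ) • g))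
    (ξ₁ : ℝ) (hξ₁ : 0 < ξ₁)
    (v₁ : EuclideanSpace ℂ (Fin N)) (hv₁ : ‖v₁‖ = 1) (heig : M v₁ = (ξ₁ : ℂ) • v₁)
    (w₀ : EuclideanSpace ℂ (Fin N))
    (hw₀ : w₀ = Real.sqrt (((4 : ℝ) ^ R₀ - 1) * σ ^ 2 / ξ₁) • v₁) :
    IsLeast {t : ℝ | ∃ Ps : ℝ, ∃ w : EuclideanSpace ℂ (Fin N), Pmin ≤ Ps ∧
        σ ^ 2 + Ps * ‖h₀‖ ^ 2 + ‖(inner ℂ h w : ℂ)‖ ^ 2 =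
          (4 : ℝ) ^ R₀ *
            (σ ^ 2 + Ps * ‖g₀‖ ^ 2 + ‖(inner ℂ g w : ℂ)‖ ^ 2) ∧
        t = Ps + ‖w‖ ^ 2}
      (Pmin + ((4 : ℝ) ^ R₀ - 1) * σ ^ 2 / ξ₁) ∧
    (σ ^ 2 + Pmin * ‖h₀‖ ^ 2 + ‖(inner ℂ h w₀ : ℂ)‖ ^ 2 =
      (4 : ℝ) ^ R₀ *
        (σ ^ 2 + Pmin * ‖g₀‖ ^ 2 + ‖(inner ℂ g w₀ : ℂ)‖ ^ 2)) ∧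
    Pmin + ‖w₀‖ ^ 2 = Pmin + ((4 : ℝ) ^ R₀ - 1) * σ ^ 2 / ξ₁ := by
  set a : ℝ := (4 : ℝ) ^ R₀ with ha_def
  have ha1 : 1 < a := by
    rw [ha_def]
    exact (Real.one_lt_rpow_iff_of_pos (by norm_num)).mpr (Or.inl ⟨by norm_num, hR₀⟩)
  have ha0 : 0 < a := lt_trans one_pos ha1
  set d : ℂ := (inner ℂ h v₁ : ℂ) with hd_def
  set f : ℂ := (inner ℂ g v₁ : ℂ) with hf_def
  have heq : d • h - ((a : ℝ) : ℂ) • (f • g) = (ξ₁ : ℂ) • v₁ := (hM v₁).symm.trans heig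
  have h1 : d * (starRingEnd ℂ) d - (a : ℂ) * (f * (starRingEnd ℂ) f) = (ξ₁ : ℂ) := by
    have t := congrArg (fun x => (inner ℂ v₁ x : ℂ)) heq
    simp only [inner_sub_right, inner_smul_right, inner_self_eq_norm_sq_to_K, hv₁] at t
    rw [← inner_conj_symm v₁ h, ← inner_conj_symm v₁ g, ← hd_def, ← hf_def] at t
    push_cast at t
    linear_combination t
  have h1' : Complex.normSq d - a * Complex.normSq f = ξ₁ := by
    rw [Complex.mul_conj, Complex.mul_conj] at h1
    exact_mod_cast h1
  -- key quadratic bound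
  have key : ∀ w : EuclideanSpace ℂ (Fin N),
      ‖(inner ℂ h w : ℂ)‖ ^ 2 - a * ‖(inner ℂ g w : ℂ)‖ ^ 2
        ≤ ξ₁ * ‖w‖ ^ 2 := by
    intro w
    set β : ℂ := (inner ℂ v₁ w : ℂ) with hβ_def
    set u : EuclideanSpace ℂ (Fin N) := w - β • v₁ with hu_def
    have hvu : (inner ℂ v₁ u : ℂ) = 0 := by
      rw [hu_def, inner_sub_right, inner_smul_right, inner_self_eq_norm_sq_to_K, hv₁,
        ← hβ_def]
      push_cast
      ring
    set c : ℂ := (inner ℂ h u : ℂ) with hc_def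
    set e : ℂ := (inner ℂ g u : ℂ) with he_def
    have h2 : d * (starRingEnd ℂ) c = (a : ℂ) * (f * (starRingEnd ℂ) e) := by
      have t := congrArg (fun x => (inner ℂ u x : ℂ)) heq
      simp only [inner_sub_right, inner_smul_right] at t
      rw [← inner_conj_symm u h, ← inner_conj_symm u g, ← hc_def, ← he_def] at t
      have huv : (inner ℂ u v₁ : ℂ) = 0 := by
        rw [← inner_conj_symm u v₁, hvu]; simp
      rw [huv] at t
      linear_combination t
    have h3 : (starRingEnd ℂ) d * c = (a : ℂ) * ((starRingEnd ℂ) f * e) := by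
      have h3' := congrArg (starRingEnd ℂ) h2
      rw [map_mul, map_mul, map_mul, Complex.conj_conj, Complex.conj_conj,
        Complex.conj_ofReal] at h3'
      linear_combination h3'
    have hneg : Complex.normSq c - a * Complex.normSq e ≤ 0 :=
      stmt16_scalar_neg a ξ₁ hξ₁ ha0 c d e f h1 h2
    have hw_sum : w = β • v₁ + u := by rw [hu_def]; abel
    have hiw : (inner ℂ h w : ℂ) = β * d + c := by
      rw [hw_sum]; simp [inner_add_right, inner_smul_right, hd_def, hc_def]
    have hgw : (inner ℂ g w : ℂ) = β * f + e := by
      rw [hw_sum]; simp [inner_add_right, inner_smul_right, hf_def, he_def]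
    have hnorm : ‖w‖ ^ 2 = Complex.normSq β + ‖u‖ ^ 2 := by
      have hperp : (inner ℂ (β • v₁) u : ℂ) = 0 := by
        rw [inner_smul_left, hvu, mul_zero]
      have hp := norm_add_sq_eq_norm_sq_add_norm_sq_of_inner_eq_zero (𝕜 := ℂ) (β • v₁) u hperp
      have hnsm : ‖β • v₁‖ = ‖β‖ := by
        rw [norm_smul, hv₁, mul_one]
      rw [hw_sum, sq, hp, hnsm, ← Complex.sq_norm]
      ring
    have E2 : (β * d + c) * (starRingEnd ℂ) (β * d + c)
        - (a : ℂ) * ((β * f + e) * (starRingEnd ℂ) (β * f + e))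
        = (ξ₁ : ℂ) * (β * (starRingEnd ℂ) β)
          + (c * (starRingEnd ℂ) c - (a : ℂ) * (e * (starRingEnd ℂ) e)) := by
      rw [map_add, map_add, map_mul, map_mul]
      linear_combination (β * (starRingEnd ℂ) β) * h1 + β * h2 + ((starRingEnd ℂ) β) * h3
    rw [Complex.mul_conj, Complex.mul_conj, Complex.mul_conj, Complex.mul_conj,
      Complex.mul_conj] at E2
    have E2' : Complex.normSq (β * d + c) - a * Complex.normSq (β * f + e)
        = ξ₁ * Complex.normSq β + (Complex.normSq c - a * Complex.normSq e) := by
      exact_mod_cast E2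
    rw [hiw, hgw, Complex.sq_norm, Complex.sq_norm, hnorm]
    nlinarith [sq_nonneg ‖u‖]
  -- quantities at w₀
  set s : ℝ := Real.sqrt ((a - 1) * σ ^ 2 / ξ₁) with hs_def
  have hargnn : 0 ≤ (a - 1) * σ ^ 2 / ξ₁ :=
    div_nonneg (mul_nonneg (by linarith) (sq_nonneg σ)) hξ₁.le
  have hs2 : s ^ 2 = (a - 1) * σ ^ 2 / ξ₁ := Real.sq_sqrt hargnn
  have hsnn : 0 ≤ s := Real.sqrt_nonneg _
  have hw₀' : w₀ = (s : ℂ) • v₁ := by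
    rw [hw₀]
    exact RCLike.real_smul_eq_coe_smul (K := ℂ) s v₁
  have hih : (inner ℂ h w₀ : ℂ) = (s : ℂ) * d := by
    rw [hw₀', inner_smul_right]
  have hig : (inner ℂ g w₀ : ℂ) = (s : ℂ) * f := by
    rw [hw₀', inner_smul_right]
  have habsh : ‖(inner ℂ h w₀ : ℂ)‖ ^ 2 = s ^ 2 * Complex.normSq d := by
    rw [hih, Complex.sq_norm, Complex.normSq_mul, Complex.normSq_ofReal, sq]
  have habsg : ‖(inner ℂ g w₀ : ℂ)‖ ^ 2 = s ^ 2 * Complex.normSq f := by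
    rw [hig, Complex.sq_norm, Complex.normSq_mul, Complex.normSq_ofReal, sq]
  have hQw₀ : ‖(inner ℂ h w₀ : ℂ)‖ ^ 2 - a * ‖(inner ℂ g w₀ : ℂ)‖ ^ 2
      = (a - 1) * σ ^ 2 := by
    rw [habsh, habsg, hs2]
    field_simp
    linear_combination (a - 1) * h1'
  have hnw₀ : ‖w₀‖ ^ 2 = (a - 1) * σ ^ 2 / ξ₁ := by
    rw [hw₀', norm_smul, hv₁, mul_one, ← hs2]
    norm_num
  have hconstr₀ : σ ^ 2 + Pmin * ‖h₀‖ ^ 2 + ‖(inner ℂ h w₀ : ℂ)‖ ^ 2 =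
      a * (σ ^ 2 + Pmin * ‖g₀‖ ^ 2 + ‖(inner ℂ g w₀ : ℂ)‖ ^ 2) := by
    linear_combination hQw₀ + Pmin * hdeg
  refine ⟨⟨⟨Pmin, w₀, le_refl _, hconstr₀, by rw [hnw₀]⟩, ?_⟩, hconstr₀, by rw [hnw₀]⟩
  rintro t ⟨Ps, w, hPs, hc, rfl⟩
  have hQw : ‖(inner ℂ h w : ℂ)‖ ^ 2 - a * ‖(inner ℂ g w : ℂ)‖ ^ 2
      = (a - 1) * σ ^ 2 := by
    linear_combination hc - Ps * hdeg
  have hkw := key w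
  have hwlb : (a - 1) * σ ^ 2 / ξ₁ ≤ ‖w‖ ^ 2 := by
    rw [div_le_iff₀ hξ₁]
    linarith
  linarith
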